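/- Let x : Fin n → ℝ be nondecreasing and let i ≤ j be indices. Then i and j lie in the same connected component of the geometric graph of x if and only if x(k+1) − x(k) ≤ 1 for every k with i ≤ k < j. In particular, for nondecreasing configurations, every connected component of the geometric graph is an interval of indices. -/

import Mathlib

/-- The geometric graph of a configuration: distinct `i`, `j` are adjacent iff
`|x i - x j| ≤ 1`. -/
def geomGraph {n : ℕ} (x : Fin n → ℝ) : SimpleGraph (Fin n) where
  Adj i j := i ≠ j ∧ |x i - x j| ≤ 1
  symm := ⟨fun i j h => ⟨h.1.symm, by rw [abs_sub_comm]; exact h.2⟩⟩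
  loopless := ⟨fun i h => h.1 rfl⟩


private lemma geomGraph_walk_le {n : ℕ} {x : Fin n → ℝ} (hx : Monotone x) {k : ℕ}
    (hk1 : k + 1 < n)
    (hgt : 1 < x ⟨k + 1, hk1⟩ - x ⟨k, by omega⟩) :
    ∀ a b : Fin n, (geomGraph x).Walk a b → (a : ℕ) ≤ k → (b : ℕ) ≤ k := by
  intro a b w
  induction w with
  | nil => exact fun h => h
  | @cons a c b hac p ih =>
    intro ha
    by_cases hc : (c : ℕ) ≤ k
    · exact ih hc
    · have h1 : x a ≤ x ⟨k, by omega⟩ := hx (by simp [Fin.le_def]; omega)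
      have h2 : x ⟨k + 1, hk1⟩ ≤ x c := hx (by simp [Fin.le_def]; omega)
      have := abs_le.mp hac.2
      exfalso; linarith

/-- For a nondecreasing configuration, indices `i ≤ j` lie in the same connected
component of the geometric graph iff all consecutive gaps between indices `i` and `j`
are at most `1`; in particular connected components are intervals of indices. -/
theorem geomGraph_reachable_iff_gaps {n : ℕ} (x : Fin n → ℝ) (hx : Monotone x)
    (i j : Fin n) (hij : i ≤ j) :
    (geomGraph x).Reachable i j ↔
      ∀ k : ℕ, (i : ℕ) ≤ k → (hk : k < (j : ℕ)) →
        x ⟨k + 1, by have := j.isLt; omega⟩ - x ⟨k, by have := j.isLt; omega⟩ ≤ 1 := by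
  constructor
  · intro hreach k hik hkj
    by_contra hgt
    push_neg at hgt
    have hk1 : k + 1 < n := by have := j.isLt; omega
    have := geomGraph_walk_le hx hk1 hgt i j hreach.some hik
    omega
  · intro hgaps
    suffices H : ∀ d : ℕ, ∀ i : Fin n,
        (∀ k : ℕ, (i : ℕ) ≤ k → (hk : k < (j : ℕ)) →
          x ⟨k + 1, by have := j.isLt; omega⟩ - x ⟨k, by have := j.isLt; omega⟩ ≤ 1) →
        i ≤ j → (j : ℕ) - (i : ℕ) = d → (geomGraph x).Reachable i j by
      exact H _ i hgaps hij rfl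
    intro d
    induction d with
    | zero =>
      intro i hg hij hd
      have : i = j := Fin.ext (by omega)
      exact this ▸ SimpleGraph.Reachable.refl i
    | succ d ih =>
      intro i hg hij hd
      have hlt : (i : ℕ) < (j : ℕ) := by omega
      have hi1 : (i : ℕ) + 1 < n := by have := j.isLt; omega
      set i' : Fin n := ⟨(i : ℕ) + 1, hi1⟩ with hi'
      have hgap : x i' - x i ≤ 1 := by simpa [hi'] using hg i le_rfl hlt
      have hmono : x i ≤ x i' := hx (by simp [hi', Fin.le_def])
      have hadj : (geomGraph x).Adj i i' := by
        refine ⟨?_, ?_⟩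
        · intro h; apply_fun (Fin.val) at h; simp [hi'] at h
        · rw [abs_sub_comm, abs_le]; constructor <;> linarith
      have hr : (geomGraph x).Reachable i' j := by
        apply ih
        · intro k hik hkj; exact hg k (by simp [hi'] at hik; omega) hkj
        · simp [hi', Fin.le_def]; omega
        · simp [hi']; omega
      exact (hadj.reachable).trans hr
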